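/- Let (uₖ), (vₖ) be nonnegative real sequences and M > 0, and suppose 2 u_{k+1} ≤ uₖ + M(vₖ − v_{k+1}) for all k ≥ K, where (vₖ) is nonnegative and nonincreasing. Then Σ_{k=K}^{∞} uₖ₊₁ ≤ u_K + M v_K; in particular Σ uₖ < ∞. -/
import Mathlib


theorem stmt_8 (u v : ℕ → ℝ) (M : ℝ) (K : ℕ) (hM : 0 < M)
    (hu : ∀ k, 0 ≤ u k) (hv : ∀ k, 0 ≤ v k) (hvmono : ∀ k, v (k + 1) ≤ v k)
    (hineq : ∀ k ≥ K, 2 * u (k + 1) ≤ u k + M * (v k - v (k + 1))) :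
    Summable u ∧ (∑' k, u (K + k + 1)) ≤ u K + M * v K := by
  have key : ∀ n, (∑ i ∈ Finset.range n, u (K + i + 1)) + u (K + n)
      ≤ u K + M * (v K - v (K + n)) := by
    intro n
    induction n with
    | zero => simp
    | succ n ih =>
        have h1 := hineq (K + n) (Nat.le_add_right K n)
        rw [Finset.sum_range_succ]
        have : K + n + 1 = K + (n + 1) := by ring
        rw [this] at h1 ⊢
        nlinarith [ih, h1]
  have bound : ∀ n, (∑ i ∈ Finset.range n, u (K + i + 1)) ≤ u K + M * v K := by
    intro n
    have h := key n
    have h2 : 0 ≤ u (K + n) := hu _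
    have h3 : 0 ≤ v (K + n) := hv _
    nlinarith
  have hsum : Summable (fun n => u (K + n + 1)) :=
    summable_of_sum_range_le (fun n => hu _) bound
  constructor
  · have : Summable (fun n => u (n + (K + 1))) := by
      apply hsum.congr
      intro n
      ring_nf
    exact (summable_nat_add_iff (K + 1)).mp this
  · exact Summable.tsum_le_of_sum_range_le hsum bound
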